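/- arXiv:2010.11858 — 4 statements merged into one kernel-verified Lean document; each statement's English description precedes it below -/
import Mathlib

section
/- Let A be a compact set with finite positive Lebesgue measure, and let f, f' : A → ℝ be measurable with ‖f‖_∞, ‖f'‖_∞ ≤ M. Let Z(f) = ∫_A exp(f(a)) da. Then |log(Z(f)/Z(f'))| ≤ e^{2M} · K · ‖f - f'‖_{L²(A)} / |A|^{1/2} for a constant K depending only on M (where K is a Lipschitz constant for exp on [-2M, 2M]). -/
open MeasureTheory Real

/-- Lipschitz bound for `exp` on a half-line. -/
lemma exp_lip_aux {B x y : ℝ} (hx : x ≤ B) (hy : y ≤ B) :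
    |Real.exp x - Real.exp y| ≤ Real.exp B * |x - y| := by
  wlog h : y ≤ x generalizing x y
  · rw [abs_sub_comm, abs_sub_comm x y]; exact this hy hx (le_of_not_ge h)
  rw [abs_of_nonneg (sub_nonneg.2 (Real.exp_le_exp.2 h)), abs_of_nonneg (sub_nonneg.2 h)]
  have h1 : Real.exp x - Real.exp y = Real.exp x * (1 - Real.exp (y - x)) := by
    rw [mul_sub, mul_one, ← Real.exp_add]; ring_nf
  have h2 : 1 - Real.exp (y - x) ≤ x - y := by
    have := Real.add_one_le_exp (y - x); linarith
  calc Real.exp x - Real.exp y = Real.exp x * (1 - Real.exp (y - x)) := h1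
    _ ≤ Real.exp x * (x - y) := by
        apply mul_le_mul_of_nonneg_left h2 (Real.exp_pos x).le
    _ ≤ Real.exp B * (x - y) := by
        apply mul_le_mul_of_nonneg_right (Real.exp_le_exp.2 hx) (by linarith)

/-- one-sided log comparison -/
lemma log_sub_le_aux {a b c : ℝ} (hc : 0 < c) (ha : c ≤ a) (hb : c ≤ b) (hba : b ≤ a) :
    Real.log a - Real.log b ≤ (a - b) / c := by
  have hb0 : 0 < b := lt_of_lt_of_le hc hb
  have ha0 : 0 < a := lt_of_lt_of_le hc ha
  rw [← Real.log_div ha0.ne' hb0.ne']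
  calc Real.log (a / b) ≤ a / b - 1 := Real.log_le_sub_one_of_pos (div_pos ha0 hb0)
    _ = (a - b) / b := by field_simp
    _ ≤ (a - b) / c := div_le_div_of_nonneg_left (by linarith) hc hb

lemma abs_log_sub_le_aux {a b c : ℝ} (hc : 0 < c) (ha : c ≤ a) (hb : c ≤ b) :
    |Real.log a - Real.log b| ≤ |a - b| / c := by
  rcases le_total b a with h | h
  · rw [abs_of_nonneg (sub_nonneg.2 h),
      abs_of_nonneg (sub_nonneg.2 (Real.log_le_log (lt_of_lt_of_le hc hb) h))]
    exact log_sub_le_aux hc ha hb h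
  · rw [abs_sub_comm, abs_sub_comm a b, abs_of_nonneg (sub_nonneg.2 h),
      abs_of_nonneg (sub_nonneg.2 (Real.log_le_log (lt_of_lt_of_le hc ha) h))]
    exact log_sub_le_aux hc hb ha h

/-- Elementary Cauchy–Schwarz: `∫ |g| ≤ √(μ univ) * √(∫ g²)` via AM-GM. -/
lemma integral_abs_le_sqrt_aux {α : Type*} [MeasurableSpace α] {μ : Measure α} (g : α → ℝ)
    (h1 : Integrable (fun a => |g a|) μ) (h2 : Integrable (fun a => g a ^ 2) μ)
    (hV : 0 < (μ Set.univ).toReal) :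
    ∫ a, |g a| ∂μ ≤ Real.sqrt ((μ Set.univ).toReal) * Real.sqrt (∫ a, g a ^ 2 ∂μ) := by
  set V := (μ Set.univ).toReal with hVdef
  set I2 := ∫ a, g a ^ 2 ∂μ with hI2def
  have hI2 : 0 ≤ I2 := integral_nonneg fun a => sq_nonneg _
  have hfin : IsFiniteMeasure μ := by
    constructor
    by_contra h
    simp only [not_lt, top_le_iff] at h
    rw [hVdef, h] at hV
    simp at hV
  have key : ∀ t : ℝ, 0 < t → ∫ a, |g a| ∂μ ≤ I2 / (2 * t) + t * V / 2 := by
    intro t ht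
    have hptw : ∀ a, |g a| ≤ g a ^ 2 / (2 * t) + t / 2 := by
      intro a
      have h := sq_nonneg (|g a| - t)
      have hga : |g a| ^ 2 = g a ^ 2 := sq_abs _
      rw [div_add_div _ _ (by positivity) (by norm_num : (2:ℝ) ≠ 0),
        le_div_iff₀ (by positivity)]
      nlinarith
    calc ∫ a, |g a| ∂μ ≤ ∫ a, (g a ^ 2 / (2 * t) + t / 2) ∂μ :=
          integral_mono h1 ((h2.div_const _).add (integrable_const _)) hptw
      _ = I2 / (2 * t) + t * V / 2 := by
          rw [integral_add (h2.div_const _) (integrable_const _),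
            integral_div, integral_const, smul_eq_mul]
          rw [measureReal_def, ← hVdef, ← hI2def]
          ring
  by_cases hI2pos : 0 < I2
  · set s1 := Real.sqrt V with hs1
    set s2 := Real.sqrt I2 with hs2
    have hs1pos : 0 < s1 := Real.sqrt_pos.2 hV
    have hs2pos : 0 < s2 := Real.sqrt_pos.2 hI2pos
    have hs1sq : s1 * s1 = V := Real.mul_self_sqrt hV.le
    have hs2sq : s2 * s2 = I2 := Real.mul_self_sqrt hI2
    have ht : 0 < s2 / s1 := div_pos hs2pos hs1pos
    have h := key (s2 / s1) ht
    have heq : I2 / (2 * (s2 / s1)) + (s2 / s1) * V / 2 = s1 * s2 := by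
      rw [← hs1sq, ← hs2sq]; field_simp; ring
    linarith [heq ▸ h]
  · have hI20 : I2 = 0 := le_antisymm (not_lt.1 hI2pos) hI2
    have hle : ∫ a, |g a| ∂μ ≤ 0 := by
      apply le_of_forall_pos_le_add
      intro ε hε
      have ht : 0 < 2 * ε / V := by positivity
      have h := key _ ht
      rw [hI20] at h
      have heq : (0:ℝ) / (2 * (2 * ε / V)) + (2 * ε / V) * V / 2 = ε := by
        field_simp
        ring
      linarith
    calc ∫ a, |g a| ∂μ ≤ 0 := hle
      _ ≤ _ := by positivity

set_option maxHeartbeats 1000000 in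
/-- log-partition-function comparison. For `f, f'` measurable and bounded by `M`
on a compact `A` of finite positive Lebesgue measure, with `Z(f) = ∫_A exp f`,
`|log (Z(f)/Z(f'))| ≤ e^{2M} K ‖f - f'‖_{L²(A)} / |A|^{1/2}` where `K` depends only on `M`
(a Lipschitz constant of `exp` on `[-2M, 2M]`). -/
theorem log_partition_function_lipschitz
    {d : ℕ} (A : Set (EuclideanSpace ℝ (Fin d)))
    (hA : IsCompact A) (hA0 : 0 < volume A) (hAfin : volume A < ⊤) (M : ℝ) :
    ∃ K : ℝ, 0 < K ∧
      (∀ x ∈ Set.Icc (-(2*M)) (2*M), ∀ y ∈ Set.Icc (-(2*M)) (2*M),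
        |Real.exp x - Real.exp y| ≤ K * |x - y|) ∧
      ∀ f f' : EuclideanSpace ℝ (Fin d) → ℝ,
        Measurable f → Measurable f' →
        (∀ a ∈ A, |f a| ≤ M) → (∀ a ∈ A, |f' a| ≤ M) →
        |Real.log ((∫ a in A, Real.exp (f a)) / (∫ a in A, Real.exp (f' a)))|
          ≤ Real.exp (2*M) * K * Real.sqrt (∫ a in A, (f a - f' a) ^ 2)
              / Real.sqrt ((volume A).toReal) := by
  refine ⟨max 1 (Real.exp (2*M)), lt_of_lt_of_le one_pos (le_max_left _ _), ?_, ?_⟩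
  · intro x hx y hy
    calc |Real.exp x - Real.exp y| ≤ Real.exp (2*M) * |x - y| := exp_lip_aux hx.2 hy.2
      _ ≤ max 1 (Real.exp (2*M)) * |x - y| :=
          mul_le_mul_of_nonneg_right (le_max_right _ _) (abs_nonneg _)
  intro f f' hf hf' hbf hbf'
  have hAm : MeasurableSet A := hA.measurableSet
  set V := (volume A).toReal with hVdef
  have hV : 0 < V := ENNReal.toReal_pos hA0.ne' hAfin.ne
  obtain ⟨a0, ha0⟩ := MeasureTheory.nonempty_of_measure_ne_zero hA0.ne'
  have hM : 0 ≤ M := le_trans (abs_nonneg _) (hbf a0 ha0)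
  set Z := ∫ a in A, Real.exp (f a) with hZdef
  set Z' := ∫ a in A, Real.exp (f' a) with hZ'def
  set I2 := ∫ a in A, (f a - f' a) ^ 2 with hI2def
  have hI2 : 0 ≤ I2 := integral_nonneg fun a => sq_nonneg _
  -- integrability of exp ∘ f
  have hintexp : ∀ h : EuclideanSpace ℝ (Fin d) → ℝ, Measurable h → (∀ a ∈ A, |h a| ≤ M) →
      IntegrableOn (fun a => Real.exp (h a)) A := by
    intro h hh hbh
    refine Integrable.mono' (g := fun _ => Real.exp M) (integrableOn_const hAfin.ne)
      ((Real.measurable_exp.comp hh).aestronglyMeasurable) ?_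
    filter_upwards [ae_restrict_mem hAm] with a ha
    rw [Real.norm_eq_abs, Real.abs_exp]
    exact Real.exp_le_exp.2 <| le_trans (le_abs_self _) (hbh a ha)
  have hintf := hintexp f hf hbf
  have hintf' := hintexp f' hf' hbf'
  have hgb : ∀ a ∈ A, |f a - f' a| ≤ 2 * M := by
    intro a ha
    calc |f a - f' a| ≤ |f a| + |f' a| := abs_sub _ _
      _ ≤ 2 * M := by linarith [hbf a ha, hbf' a ha]
  have hI1int : IntegrableOn (fun a => |f a - f' a|) A := by
    refine Integrable.mono' (g := fun _ => 2*M) (integrableOn_const hAfin.ne)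
      (((hf.sub hf').abs).aestronglyMeasurable) ?_
    filter_upwards [ae_restrict_mem hAm] with a ha
    rw [Real.norm_eq_abs, abs_abs]; exact hgb a ha
  have hI2int : IntegrableOn (fun a => (f a - f' a) ^ 2) A := by
    refine Integrable.mono' (g := fun _ => (2*M)^2) (integrableOn_const hAfin.ne)
      (((hf.sub hf').pow_const 2).aestronglyMeasurable) ?_
    filter_upwards [ae_restrict_mem hAm] with a ha
    rw [Real.norm_eq_abs, abs_of_nonneg (sq_nonneg _)]
    have h2 := abs_le.1 (hgb a ha)
    exact sq_le_sq' (by linarith [h2.1]) h2.2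
  -- lower bound on Z, Z'
  have hZlb : ∀ h : EuclideanSpace ℝ (Fin d) → ℝ, Measurable h → (∀ a ∈ A, |h a| ≤ M) →
      Real.exp (-M) * V ≤ ∫ a in A, Real.exp (h a) := by
    intro h hh hbh
    have hmono : ∫ _ in A, Real.exp (-M) ≤ ∫ a in A, Real.exp (h a) := by
      apply setIntegral_mono_on (integrableOn_const hAfin.ne) (hintexp h hh hbh) hAm
      intro a ha
      exact Real.exp_le_exp.2 (by linarith [(abs_le.1 (hbh a ha)).1])
    rwa [setIntegral_const, smul_eq_mul, mul_comm] at hmono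
  have hZc := hZlb f hf hbf
  have hZ'c := hZlb f' hf' hbf'
  have hc : 0 < Real.exp (-M) * V := by positivity
  have hZpos : 0 < Z := lt_of_lt_of_le hc hZc
  have hZ'pos : 0 < Z' := lt_of_lt_of_le hc hZ'c
  -- |Z - Z'| ≤ exp M * ∫ |g|
  have hZZ' : |Z - Z'| ≤ Real.exp M * ∫ a in A, |f a - f' a| := by
    rw [hZdef, hZ'def, ← integral_sub hintf hintf']
    calc |∫ a in A, (Real.exp (f a) - Real.exp (f' a))|
        ≤ ∫ a in A, |Real.exp (f a) - Real.exp (f' a)| := by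
          simpa [Real.norm_eq_abs] using
            norm_integral_le_integral_norm (μ := volume.restrict A)
              (fun a => Real.exp (f a) - Real.exp (f' a))
      _ ≤ ∫ a in A, Real.exp M * |f a - f' a| := by
          apply setIntegral_mono_on ((hintf.sub hintf').abs) (hI1int.const_mul _) hAm
          intro a ha
          exact exp_lip_aux (le_trans (le_abs_self _) (hbf a ha))
            (le_trans (le_abs_self _) (hbf' a ha))
      _ = Real.exp M * ∫ a in A, |f a - f' a| := integral_const_mul _ _
  -- Cauchy–Schwarz
  have hCS : ∫ a in A, |f a - f' a| ≤ Real.sqrt V * Real.sqrt I2 := by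
    have h := integral_abs_le_sqrt_aux (μ := volume.restrict A) (fun a => f a - f' a)
      hI1int hI2int (by rwa [Measure.restrict_apply_univ])
    rwa [Measure.restrict_apply_univ] at h
  -- combine
  have hlog : |Real.log (Z / Z')| ≤ |Z - Z'| / (Real.exp (-M) * V) := by
    rw [Real.log_div hZpos.ne' hZ'pos.ne']
    exact abs_log_sub_le_aux hc hZc hZ'c
  have hs1pos : 0 < Real.sqrt V := Real.sqrt_pos.2 hV
  have hs2 : 0 ≤ Real.sqrt I2 := Real.sqrt_nonneg _
  have hexp2 : Real.exp (2*M) = Real.exp M * Real.exp M := by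
    rw [← Real.exp_add]; ring_nf
  calc |Real.log (Z / Z')| ≤ |Z - Z'| / (Real.exp (-M) * V) := hlog
    _ ≤ (Real.exp M * (Real.sqrt V * Real.sqrt I2)) / (Real.exp (-M) * V) := by
        gcongr
        exact hZZ'.trans (mul_le_mul_of_nonneg_left hCS (Real.exp_pos M).le)
    _ = Real.exp (2*M) * Real.sqrt I2 / Real.sqrt V := by
        rw [Real.exp_neg, hexp2]
        field_simp
        linear_combination Real.sqrt I2 * Real.sq_sqrt hV.le
    _ ≤ Real.exp (2*M) * max 1 (Real.exp (2*M)) * Real.sqrt I2 / Real.sqrt V := by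
        gcongr
        nlinarith [le_max_left 1 (Real.exp (2*M)), Real.exp_pos (2*M)]
end

section
/- Suppose ν* is a probability measure on Ω = ℝ × Θ, with ψ(a;(ω₀, ω̄)) = ω₀ φ(a; ω̄), such that (i) the projection of supp(ν*) onto Θ is all of Θ, (ii) the span of {φ(·; ω̄) : ω̄ ∈ Θ} is dense in L²(A), and (iii) for all ω in supp(ν*), ∫_A ∇_ω ψ(a;ω) (r(a) − τ f_{ν*}(a) − V_{ν*}) π_{ν*}(da) = 0, where f_{ν*}(a) = ∫ ψ(a;ω) ν*(dω) is bounded and π_{ν*} = exp(f_{ν*})/Z > 0 on A. Then f_{ν*}(a) = τ^{-1} r(a) + C for a constant C, Lebesgue-a.e. on A, and hence π_{ν*} equals the optimal Boltzmann policy exp(r/τ)/∫exp(r/τ). -/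
open MeasureTheory Real

/-- The topological support of a measure on `ℝ × Θ`: points all of whose open neighbourhoods
have positive measure. -/
def measSupport {Ω : Type*} [TopologicalSpace Ω] [MeasurableSpace Ω]
    (ν : Measure Ω) : Set Ω :=
  {ω | ∀ U : Set Ω, IsOpen U → ω ∈ U → 0 < ν U}

/-- global optimality of full-support stationary points of mean-field softmax
policy gradient in the bandit setting. If `ν*` on `Ω = ℝ × Θ` has full projected support,
the features `φ(·;ω̄)` span a dense subspace of `L²(A)`, and the policy gradient field
`∫_A ∇_ω ψ(a;ω)(r(a) − τ f_{ν*}(a) − V_{ν*}) π_{ν*}(da)` vanishes on `supp ν*` (components: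
`∇_{ω₀}ψ = φ(·;ω̄)` and `∇_{ω̄}ψ = ω₀ Dφ(·;ω̄)`), then `f_{ν*} = τ⁻¹ r + C` a.e. for a
constant `C`, and `π_{ν*}` is the optimal Boltzmann policy `exp(r/τ)/∫exp(r/τ)`. -/
theorem bandit_full_support_stationary_is_optimal
    {dA k : ℕ} (A : Set (EuclideanSpace ℝ (Fin dA)))
    (hA : IsCompact A) (hA0 : 0 < volume A) (hAfin : volume A < ⊤)
    (τ : ℝ) (hτ : 0 < τ)
    (r : EuclideanSpace ℝ (Fin dA) → ℝ) (hr : Measurable r) (Mr : ℝ)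
    (hrb : ∀ a ∈ A, |r a| ≤ Mr)
    (φ : EuclideanSpace ℝ (Fin dA) → EuclideanSpace ℝ (Fin k) → ℝ)
    (Dφ : EuclideanSpace ℝ (Fin dA) → EuclideanSpace ℝ (Fin k) →
      (EuclideanSpace ℝ (Fin k) →L[ℝ] ℝ))
    (hφmeas : ∀ θ, Measurable (fun a => φ a θ)) (Cφ : ℝ)
    (hφbd : ∀ a θ, |φ a θ| ≤ Cφ)
    (hφdiff : ∀ a θ, HasFDerivAt (φ a) (Dφ a θ) θ)
    (ν : Measure (ℝ × EuclideanSpace ℝ (Fin k))) [IsProbabilityMeasure ν]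
    (hmom : Integrable (fun ω : ℝ × EuclideanSpace ℝ (Fin k) => ω.1) ν)
    -- the mean-field energy `f_{ν*}`, assumed bounded, the partition function, the policy,
    -- and the value
    (f : EuclideanSpace ℝ (Fin dA) → ℝ)
    (hf : ∀ a, f a = ∫ ω : ℝ × EuclideanSpace ℝ (Fin k), ω.1 * φ a ω.2 ∂ν)
    (Mf : ℝ) (hfbd : ∀ a, |f a| ≤ Mf)
    (Z : ℝ) (hZ : Z = ∫ a in A, Real.exp (f a))
    (pol : EuclideanSpace ℝ (Fin dA) → ℝ) (hpol : ∀ a, pol a = Real.exp (f a) / Z)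
    (V : ℝ) (hV : V = ∫ a in A, (r a - τ * Real.log (pol a)) * pol a)
    -- (i) full projected support
    (hproj : ∀ θ : EuclideanSpace ℝ (Fin k), ∃ ω₀ : ℝ, (ω₀, θ) ∈ measSupport ν)
    -- (ii) universal approximation: density of the span of the features in L²(A)
    (hφL2 : ∀ θ, MemLp (fun a => φ a θ) 2 (volume.restrict A))
    (hdense : Dense ((Submodule.span ℝ
        (Set.range fun θ : EuclideanSpace ℝ (Fin k) => (hφL2 θ).toLp (fun a => φ a θ)) :
        Submodule ℝ (Lp ℝ 2 (volume.restrict A))) : Set (Lp ℝ 2 (volume.restrict A))))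
    -- (iii) stationarity of the policy gradient field on the support of `ν*`
    (hstat : ∀ ω ∈ measSupport ν,
      ((∫ a in A, φ a ω.2 * ((r a - τ * f a - V) * pol a)) = 0
        ∧ (∫ a in A, ((r a - τ * f a - V) * pol a) • (ω.1 • Dφ a ω.2)) = 0)) :
    ∃ C : ℝ,
      (∀ᵐ a ∂(volume.restrict A), f a = τ⁻¹ * r a + C)
      ∧ (∀ᵐ a ∂(volume.restrict A),
          pol a = Real.exp (r a / τ) / ∫ a' in A, Real.exp (r a' / τ)) := by
  classical
  have hAm : MeasurableSet A := hA.isClosed.measurableSet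
  haveI hres : IsFiniteMeasure (volume.restrict A) :=
    ⟨by rw [Measure.restrict_apply_univ]; exact hAfin⟩
  -- measurability of f
  have hfm : Measurable f := by
    have hcont : ∀ a, Continuous fun θ => φ a θ := by
      intro a
      exact continuous_iff_continuousAt.2 fun θ => (hφdiff a θ).continuousAt
    have hu : Measurable (Function.uncurry
        (fun (θ : EuclideanSpace ℝ (Fin k)) (a : EuclideanSpace ℝ (Fin dA)) => φ a θ)) :=
      measurable_uncurry_of_continuous_of_measurable (fun a => hcont a) hφmeas
    have hF : StronglyMeasurable (fun p :
        EuclideanSpace ℝ (Fin dA) × (ℝ × EuclideanSpace ℝ (Fin k)) =>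
        p.2.1 * φ p.1 p.2.2) := by
      refine Measurable.stronglyMeasurable ?_
      exact (measurable_fst.comp measurable_snd).mul
        (hu.comp ((measurable_snd.comp measurable_snd).prodMk measurable_fst))
    have := hF.integral_prod_right' (ν := ν)
    have heq : f = fun a => ∫ ω, ω.1 * φ a ω.2 ∂ν := funext hf
    rw [heq]
    exact this.measurable
  -- positivity of Z
  have hexpint : IntegrableOn (fun a => Real.exp (f a)) A volume := by
    refine Integrable.mono' (g := fun _ => Real.exp Mf)
      (integrableOn_const hAfin.ne) (hfm.exp.aestronglyMeasurable) ?_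
    filter_upwards with a
    rw [Real.norm_eq_abs, abs_of_pos (Real.exp_pos _)]
    exact Real.exp_le_exp.2 (le_of_abs_le (hfbd a))
  have hvolpos : 0 < (volume A).toReal := ENNReal.toReal_pos hA0.ne' hAfin.ne
  have hZpos : 0 < Z := by
    have hge : Real.exp (-Mf) * (volume A).toReal ≤ ∫ a in A, Real.exp (f a) := by
      refine setIntegral_ge_of_const_le_real hAm hAfin.ne (fun a _ => ?_) hexpint
      exact Real.exp_le_exp.2 (neg_le_of_abs_le (hfbd a))
    have : 0 < Real.exp (-Mf) * (volume A).toReal :=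
      mul_pos (Real.exp_pos _) hvolpos
    rw [hZ]; linarith
  have hpolpos : ∀ a, 0 < pol a := by
    intro a; rw [hpol]; exact div_pos (Real.exp_pos _) hZpos
  have hpolm : Measurable pol := by
    have : pol = fun a => Real.exp (f a) / Z := funext hpol
    rw [this]; exact hfm.exp.div_const Z
  -- the L² function g
  set g : EuclideanSpace ℝ (Fin dA) → ℝ := fun a => (r a - τ * f a - V) * pol a with hgdef
  have hgm : Measurable g := ((hr.sub (measurable_const.mul hfm)).sub measurable_const).mul hpolm
  have hpolbd : ∀ a, |pol a| ≤ Real.exp Mf / Z := by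
    intro a
    rw [hpol, abs_of_pos (div_pos (Real.exp_pos _) hZpos)]
    exact (div_le_div_iff_of_pos_right hZpos).2 (Real.exp_le_exp.2 (le_of_abs_le (hfbd a)))
  have hMf0 : 0 ≤ Mf := (abs_nonneg (f 0)).trans (hfbd 0)
  set Cg : ℝ := (|Mr| + τ * Mf + |V|) * (Real.exp Mf / Z) with hCg
  have hgbd : ∀ a ∈ A, ‖g a‖ ≤ Cg := by
    intro a ha
    rw [Real.norm_eq_abs, hgdef]
    simp only []
    rw [abs_mul]
    have h2 : |r a| ≤ |Mr| := (hrb a ha).trans (le_abs_self Mr)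
    have h3 : |τ * f a| ≤ τ * Mf := by
      rw [abs_mul, abs_of_pos hτ]
      exact mul_le_mul_of_nonneg_left (hfbd a) hτ.le
    refine mul_le_mul ?_ (hpolbd a) (abs_nonneg _) ?_
    · calc |r a - τ * f a - V| ≤ |r a - τ * f a| + |V| := abs_sub _ _
        _ ≤ |r a| + |τ * f a| + |V| := by linarith [abs_sub (r a) (τ * f a)]
        _ ≤ |Mr| + τ * Mf + |V| := by linarith
    · exact add_nonneg (add_nonneg (abs_nonneg _) (mul_nonneg hτ.le hMf0)) (abs_nonneg _)
  have hgL2 : MemLp g 2 (volume.restrict A) := by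
    refine MemLp.of_bound hgm.aestronglyMeasurable Cg ?_
    exact (ae_restrict_iff' hAm).2 (Filter.Eventually.of_forall hgbd)
  set G : Lp ℝ 2 (volume.restrict A) := hgL2.toLp g with hGdef
  -- inner products with the features vanish
  have hinner : ∀ θ, inner ℝ ((hφL2 θ).toLp (fun a => φ a θ)) G = (0 : ℝ) := by
    intro θ
    obtain ⟨ω₀, hω₀⟩ := hproj θ
    have hst := (hstat (ω₀, θ) hω₀).1
    rw [MeasureTheory.L2.inner_def]
    have : ∫ a, inner ℝ (((hφL2 θ).toLp (fun a => φ a θ)) a) (G a) ∂(volume.restrict A)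
        = ∫ a in A, φ a θ * g a := by
      refine integral_congr_ae ?_
      filter_upwards [(hφL2 θ).coeFn_toLp, hgL2.coeFn_toLp] with a h1 h2
      rw [h1, h2, RCLike.inner_apply]
      simp [mul_comm]
    rw [this]
    exact hst
  -- G is orthogonal to a dense subspace, hence zero
  have hG0 : G = 0 := by
    set T : Lp ℝ 2 (volume.restrict A) →L[ℝ] ℝ := (innerSL ℝ G) with hT
    have hTzero : ∀ v, T v = 0 := by
      intro v
      have hsub : (↑(Submodule.span ℝ
          (Set.range fun θ : EuclideanSpace ℝ (Fin k) =>
            (hφL2 θ).toLp (fun a => φ a θ))) : Set (Lp ℝ 2 (volume.restrict A)))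
          ⊆ {w | T w = 0} := by
        intro w hw
        have : w ∈ LinearMap.ker (T : Lp ℝ 2 (volume.restrict A) →ₗ[ℝ] ℝ) := by
          refine Submodule.span_le.2 ?_ hw
          rintro _ ⟨θ, rfl⟩
          simp only [SetLike.mem_coe, LinearMap.mem_ker]
          show T _ = 0
          rw [hT, innerSL_apply_apply]
          rw [real_inner_comm]
          exact hinner θ
        exact this
      have hclosed : IsClosed {w : Lp ℝ 2 (volume.restrict A) | T w = 0} :=
        isClosed_eq T.continuous continuous_const
      have : v ∈ closure (↑(Submodule.span ℝ
          (Set.range fun θ : EuclideanSpace ℝ (Fin k) =>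
            (hφL2 θ).toLp (fun a => φ a θ))) : Set (Lp ℝ 2 (volume.restrict A))) := by
        rw [hdense.closure_eq]; trivial
      exact closure_minimal hsub hclosed this
    have : (inner ℝ G G : ℝ) = 0 := by
      have := hTzero G
      rwa [hT, innerSL_apply_apply] at this
    exact inner_self_eq_zero.1 this
  -- hence g = 0 a.e. on A
  have hgae : ∀ᵐ a ∂(volume.restrict A), g a = 0 := by
    have h1 : g =ᵐ[volume.restrict A] G := hgL2.coeFn_toLp.symm
    have h2 : (G : EuclideanSpace ℝ (Fin dA) → ℝ) =ᵐ[volume.restrict A] 0 := by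
      rw [hG0]; exact Lp.coeFn_zero _ _ _
    filter_upwards [h1, h2] with a ha hb
    rw [ha, hb]; rfl
  -- first conclusion
  refine ⟨-(τ⁻¹ * V), ?_, ?_⟩
  · filter_upwards [hgae] with a ha
    have hz : r a - τ * f a - V = 0 := by
      rcases mul_eq_zero.1 ha with h | h
      · exact h
      · exact absurd h (hpolpos a).ne'
    have h4 : τ * f a = r a - V := by linarith
    calc f a = τ⁻¹ * (τ * f a) := by field_simp
      _ = τ⁻¹ * (r a - V) := by rw [h4]
      _ = τ⁻¹ * r a + -(τ⁻¹ * V) := by ring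
  · have hfeq : ∀ᵐ a ∂(volume.restrict A),
        Real.exp (f a) = Real.exp (-(τ⁻¹ * V)) * Real.exp (r a / τ) := by
      filter_upwards [hgae] with a ha
      have hz : r a - τ * f a - V = 0 := by
        rcases mul_eq_zero.1 ha with h | h
        · exact h
        · exact absurd h (hpolpos a).ne'
      rw [← Real.exp_add]
      congr 1
      have h4 : τ * f a = r a - V := by linarith
      calc f a = τ⁻¹ * (τ * f a) := by field_simp
        _ = τ⁻¹ * (r a - V) := by rw [h4]
        _ = -(τ⁻¹ * V) + r a / τ := by rw [div_eq_mul_inv]; ring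
    have hI : Z = Real.exp (-(τ⁻¹ * V)) * ∫ a' in A, Real.exp (r a' / τ) := by
      rw [hZ, integral_congr_ae hfeq, integral_const_mul]
    filter_upwards [hfeq] with a ha
    rw [hpol, ha, hI, mul_div_mul_left _ _ (Real.exp_ne_zero _)]
end

section
/- Let Q, Q' : S × A → ℝ be bounded measurable functions on compact spaces S, A (A of positive finite Lebesgue measure), τ > 0, γ ∈ (0,1). Define the soft Bellman backup (T^τ Q)(s,a) = r̄(s,a) + γ ∫_S τ log(∫_A exp(Q(s',a')/τ) da') P(s,a,ds'), where P(s,a,·) is a Markov kernel and r̄ bounded. Then ‖T^τ Q − T^τ Q'‖_∞ ≤ γ ‖Q − Q'‖_∞; i.e. T^τ is a γ-contraction in the supremum norm and has a unique bounded fixed point. -/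
open MeasureTheory Real

variable {S : Type*} [MeasurableSpace S] {d : ℕ}

/-- The soft Bellman backup operator
`(T^τ Q)(s,a) = r̄(s,a) + γ ∫_S τ log (∫_A exp(Q(s',a')/τ) da') P(s,a,ds')`. -/
noncomputable def softBellman (A : Set (EuclideanSpace ℝ (Fin d)))
    (rbar : S → EuclideanSpace ℝ (Fin d) → ℝ) (γ τ : ℝ)
    (P : S → EuclideanSpace ℝ (Fin d) → Measure S)
    (Q : S → EuclideanSpace ℝ (Fin d) → ℝ) (s : S) (a : EuclideanSpace ℝ (Fin d)) : ℝ :=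
  rbar s a + γ * ∫ s', τ * Real.log (∫ a' in A, Real.exp (Q s' a' / τ)) ∂(P s a)

section aux

variable {d : ℕ}

lemma lse_lipschitz {A : Set (EuclideanSpace ℝ (Fin d))}
    (hAm : MeasurableSet A) (hA0 : 0 < volume A) (hAfin : volume A < ⊤)
    {τ : ℝ} (hτ : 0 < τ) {f g : EuclideanSpace ℝ (Fin d) → ℝ}
    (hf : Measurable f) (hg : Measurable g)
    {Mf Mg C : ℝ} (hMf : ∀ a, |f a| ≤ Mf) (hMg : ∀ a, |g a| ≤ Mg)
    (hC : ∀ a, f a ≤ g a + C) :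
    τ * Real.log (∫ a in A, Real.exp (f a / τ)) ≤
    τ * Real.log (∫ a in A, Real.exp (g a / τ)) + C := by
  haveI : IsFiniteMeasure (volume.restrict A) :=
    ⟨by rwa [Measure.restrict_apply_univ]⟩
  have intf : IntegrableOn (fun a => Real.exp (f a / τ)) A volume := by
    refine Integrable.mono' (integrable_const (Real.exp (Mf / τ)))
      ((hf.div_const τ).exp.aestronglyMeasurable) ?_
    filter_upwards with a
    rw [Real.norm_eq_abs, abs_of_pos (Real.exp_pos _)]
    exact Real.exp_le_exp.2 (div_le_div_of_nonneg_right ((abs_le.1 (hMf a)).2) hτ.le)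
  have intg : IntegrableOn (fun a => Real.exp (g a / τ)) A volume := by
    refine Integrable.mono' (integrable_const (Real.exp (Mg / τ)))
      ((hg.div_const τ).exp.aestronglyMeasurable) ?_
    filter_upwards with a
    rw [Real.norm_eq_abs, abs_of_pos (Real.exp_pos _)]
    exact Real.exp_le_exp.2 (div_le_div_of_nonneg_right ((abs_le.1 (hMg a)).2) hτ.le)
  have hvA : 0 < (volume A).toReal := ENNReal.toReal_pos hA0.ne' hAfin.ne
  have hglb : (volume A).toReal * Real.exp (-Mg / τ) ≤ ∫ a in A, Real.exp (g a / τ) := by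
    have : ∫ a in A, Real.exp (-Mg / τ) ≤ ∫ a in A, Real.exp (g a / τ) := by
      refine setIntegral_mono (integrable_const _) intg fun a => ?_
      exact Real.exp_le_exp.2 (div_le_div_of_nonneg_right ((abs_le.1 (hMg a)).1) hτ.le)
    simpa [smul_eq_mul, measureReal_def] using this
  have hgpos : 0 < ∫ a in A, Real.exp (g a / τ) :=
    lt_of_lt_of_le (by positivity) hglb
  have hfpos : 0 < ∫ a in A, Real.exp (f a / τ) := by
    have hflb : (volume A).toReal * Real.exp (-Mf / τ) ≤ ∫ a in A, Real.exp (f a / τ) := by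
      have : ∫ a in A, Real.exp (-Mf / τ) ≤ ∫ a in A, Real.exp (f a / τ) := by
        refine setIntegral_mono (integrable_const _) intf fun a => ?_
        exact Real.exp_le_exp.2 (div_le_div_of_nonneg_right ((abs_le.1 (hMf a)).1) hτ.le)
      simpa [smul_eq_mul, measureReal_def] using this
    exact lt_of_lt_of_le (by positivity) hflb
  have hIle : (∫ a in A, Real.exp (f a / τ)) ≤
      Real.exp (C / τ) * ∫ a in A, Real.exp (g a / τ) := by
    rw [← integral_const_mul]
    refine setIntegral_mono intf (intg.const_mul _) fun a => ?_
    rw [← Real.exp_add]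
    refine Real.exp_le_exp.2 ?_
    rw [← add_div]
    exact div_le_div_of_nonneg_right (by linarith [hC a]) hτ.le
  have hlog : Real.log (∫ a in A, Real.exp (f a / τ)) ≤
      C / τ + Real.log (∫ a in A, Real.exp (g a / τ)) := by
    calc Real.log (∫ a in A, Real.exp (f a / τ))
        ≤ Real.log (Real.exp (C / τ) * ∫ a in A, Real.exp (g a / τ)) :=
          Real.log_le_log hfpos hIle
      _ = C / τ + Real.log (∫ a in A, Real.exp (g a / τ)) := by
          rw [Real.log_mul (Real.exp_pos _).ne' hgpos.ne', Real.log_exp]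
  have := mul_le_mul_of_nonneg_left hlog hτ.le
  calc τ * Real.log (∫ a in A, Real.exp (f a / τ))
      ≤ τ * (C / τ + Real.log (∫ a in A, Real.exp (g a / τ))) := this
    _ = τ * Real.log (∫ a in A, Real.exp (g a / τ)) + C := by
        field_simp; ring

end aux

section aux2

variable {S : Type*} [MeasurableSpace S] {d : ℕ}

lemma vQ_props {A : Set (EuclideanSpace ℝ (Fin d))}
    (hAm : MeasurableSet A) (hA0 : 0 < volume A) (hAfin : volume A < ⊤)
    {τ : ℝ} (hτ : 0 < τ) {Q : S → EuclideanSpace ℝ (Fin d) → ℝ}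
    (hQ : Measurable (Function.uncurry Q)) {M : ℝ} (hM : ∀ s a, |Q s a| ≤ M) :
    Measurable (fun s' => τ * Real.log (∫ a' in A, Real.exp (Q s' a' / τ))) ∧
    ∀ s', |τ * Real.log (∫ a' in A, Real.exp (Q s' a' / τ))| ≤
      M + |τ * Real.log (volume A).toReal| := by
  haveI : IsFiniteMeasure (volume.restrict A) :=
    ⟨by rwa [Measure.restrict_apply_univ]⟩
  have hFm : StronglyMeasurable fun p : S × EuclideanSpace ℝ (Fin d) =>
      Real.exp (Function.uncurry Q p / τ) := ((hQ.div_const τ).exp).stronglyMeasurable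
  constructor
  · exact (measurable_const.mul (hFm.integral_prod_right'.measurable.log))
  · intro s'
    have hQs : Measurable fun a' => Q s' a' := hQ.comp measurable_prodMk_left
    have intf : IntegrableOn (fun a => Real.exp (Q s' a / τ)) A volume := by
      refine Integrable.mono' (integrable_const (Real.exp (M / τ)))
        ((hQs.div_const τ).exp.aestronglyMeasurable) ?_
      filter_upwards with a
      rw [Real.norm_eq_abs, abs_of_pos (Real.exp_pos _)]
      exact Real.exp_le_exp.2 (div_le_div_of_nonneg_right ((abs_le.1 (hM s' a)).2) hτ.le)
    have hvA : 0 < (volume A).toReal := ENNReal.toReal_pos hA0.ne' hAfin.ne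
    have hub : (∫ a in A, Real.exp (Q s' a / τ)) ≤ (volume A).toReal * Real.exp (M / τ) := by
      have : ∫ a in A, Real.exp (Q s' a / τ) ≤ ∫ _a in A, Real.exp (M / τ) := by
        refine setIntegral_mono intf (integrable_const _) fun a => ?_
        exact Real.exp_le_exp.2 (div_le_div_of_nonneg_right ((abs_le.1 (hM s' a)).2) hτ.le)
      simpa [smul_eq_mul, measureReal_def] using this
    have hlb : (volume A).toReal * Real.exp (-M / τ) ≤ ∫ a in A, Real.exp (Q s' a / τ) := by
      have : ∫ _a in A, Real.exp (-M / τ) ≤ ∫ a in A, Real.exp (Q s' a / τ) := by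
        refine setIntegral_mono (integrable_const _) intf fun a => ?_
        exact Real.exp_le_exp.2 (div_le_div_of_nonneg_right ((abs_le.1 (hM s' a)).1) hτ.le)
      simpa [smul_eq_mul, measureReal_def] using this
    have hIpos : 0 < ∫ a in A, Real.exp (Q s' a / τ) :=
      lt_of_lt_of_le (by positivity) hlb
    have hlogub : Real.log (∫ a in A, Real.exp (Q s' a / τ)) ≤
        Real.log (volume A).toReal + M / τ := by
      calc Real.log (∫ a in A, Real.exp (Q s' a / τ))
          ≤ Real.log ((volume A).toReal * Real.exp (M / τ)) := Real.log_le_log hIpos hub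
        _ = Real.log (volume A).toReal + M / τ := by
            rw [Real.log_mul hvA.ne' (Real.exp_pos _).ne', Real.log_exp]
    have hloglb : Real.log (volume A).toReal + (-M) / τ ≤
        Real.log (∫ a in A, Real.exp (Q s' a / τ)) := by
      calc Real.log (volume A).toReal + (-M) / τ
          = Real.log ((volume A).toReal * Real.exp (-M / τ)) := by
            rw [Real.log_mul hvA.ne' (Real.exp_pos _).ne', Real.log_exp]
        _ ≤ Real.log (∫ a in A, Real.exp (Q s' a / τ)) :=
            Real.log_le_log (by positivity) hlb
    have h1 := mul_le_mul_of_nonneg_left hlogub hτ.le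
    have h2 := mul_le_mul_of_nonneg_left hloglb hτ.le
    have hτM : τ * (Real.log (volume A).toReal + M / τ) = τ * Real.log (volume A).toReal + M := by
      field_simp
    have hτM' : τ * (Real.log (volume A).toReal + (-M) / τ)
        = τ * Real.log (volume A).toReal - M := by field_simp; ring
    rw [hτM] at h1; rw [hτM'] at h2
    have ha := le_abs_self (τ * Real.log (volume A).toReal)
    have hb := neg_abs_le (τ * Real.log (volume A).toReal)
    rw [abs_le]; constructor <;> linarith

end aux2

/-- the soft Bellman backup is a `γ`-contraction in the supremum norm, and has
a unique bounded (measurable) fixed point. -/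
theorem softBellman_contraction
    (A : Set (EuclideanSpace ℝ (Fin d)))
    (hA : IsCompact A) (hA0 : 0 < volume A) (hAfin : volume A < ⊤)
    (τ γ : ℝ) (hτ : 0 < τ) (hγ : γ ∈ Set.Ioo (0:ℝ) 1)
    (rbar : S → EuclideanSpace ℝ (Fin d) → ℝ)
    (hrmeas : Measurable (Function.uncurry rbar)) (Cr : ℝ)
    (hrbd : ∀ s a, |rbar s a| ≤ Cr)
    (P : S → EuclideanSpace ℝ (Fin d) → Measure S)
    (hP : ∀ s a, IsProbabilityMeasure (P s a)) :
    (∀ (Q Q' : S → EuclideanSpace ℝ (Fin d) → ℝ) (C : ℝ),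
      Measurable (Function.uncurry Q) → Measurable (Function.uncurry Q') →
      (∃ M, ∀ s a, |Q s a| ≤ M) → (∃ M, ∀ s a, |Q' s a| ≤ M) →
      (∀ s a, |Q s a - Q' s a| ≤ C) →
      ∀ s a, |softBellman A rbar γ τ P Q s a - softBellman A rbar γ τ P Q' s a| ≤ γ * C)
    ∧ (∀ (Q Q' : S → EuclideanSpace ℝ (Fin d) → ℝ),
        Measurable (Function.uncurry Q) → Measurable (Function.uncurry Q') →
        (∃ M, ∀ s a, |Q s a| ≤ M) → (∃ M, ∀ s a, |Q' s a| ≤ M) →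
        (∀ s a, Q s a = softBellman A rbar γ τ P Q s a) →
        (∀ s a, Q' s a = softBellman A rbar γ τ P Q' s a) →
        Q = Q') := by
  have key : ∀ (Q Q' : S → EuclideanSpace ℝ (Fin d) → ℝ) (C : ℝ),
        Measurable (Function.uncurry Q) → Measurable (Function.uncurry Q') →
        (∃ M, ∀ s a, |Q s a| ≤ M) → (∃ M, ∀ s a, |Q' s a| ≤ M) →
        (∀ s a, |Q s a - Q' s a| ≤ C) →
        ∀ s a, |softBellman A rbar γ τ P Q s a - softBellman A rbar γ τ P Q' s a| ≤ γ * C := by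
      rintro Q Q' C hQm hQ'm ⟨M, hM⟩ ⟨M', hM'⟩ hC s a
      haveI := hP s a
      obtain ⟨hVm, hVb⟩ := vQ_props hA.measurableSet hA0 hAfin hτ hQm hM
      obtain ⟨hV'm, hV'b⟩ := vQ_props hA.measurableSet hA0 hAfin hτ hQ'm hM'
      set V : S → ℝ := fun s' => τ * Real.log (∫ a' in A, Real.exp (Q s' a' / τ)) with hV
      set V' : S → ℝ := fun s' => τ * Real.log (∫ a' in A, Real.exp (Q' s' a' / τ)) with hV'
      have hVint : Integrable V (P s a) :=
        Integrable.mono' (integrable_const (M + |τ * Real.log (volume A).toReal|))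
          hVm.aestronglyMeasurable (Filter.Eventually.of_forall fun s' => by
            simpa [Real.norm_eq_abs, hV, abs_mul] using hVb s')
      have hV'int : Integrable V' (P s a) :=
        Integrable.mono' (integrable_const (M' + |τ * Real.log (volume A).toReal|))
          hV'm.aestronglyMeasurable (Filter.Eventually.of_forall fun s' => by
            simpa [Real.norm_eq_abs, hV', abs_mul] using hV'b s')
      have hptw : ∀ s', |V s' - V' s'| ≤ C := by
        intro s'
        have hQs : Measurable fun a' => Q s' a' := hQm.comp measurable_prodMk_left
        have hQ's : Measurable fun a' => Q' s' a' := hQ'm.comp measurable_prodMk_left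
        rw [abs_le]
        constructor
        · have := lse_lipschitz (C := C) hA.measurableSet hA0 hAfin hτ hQ's hQs
            (hM' s') (hM s') (fun a' => by linarith [(abs_le.1 (hC s' a')).1])
          simp only [hV, hV'] at *
          linarith
        · have := lse_lipschitz (C := C) hA.measurableSet hA0 hAfin hτ hQs hQ's
            (hM s') (hM' s') (fun a' => by linarith [(abs_le.1 (hC s' a')).2])
          simp only [hV, hV'] at *
          linarith
      have hdiff : softBellman A rbar γ τ P Q s a - softBellman A rbar γ τ P Q' s a
          = γ * ∫ s', (V s' - V' s') ∂(P s a) := by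
        simp only [softBellman]
        rw [integral_sub hVint hV'int]
        ring
      rw [hdiff, abs_mul, abs_of_pos hγ.1]
      have hnormI : ‖∫ s', (V s' - V' s') ∂(P s a)‖ ≤ C * ((P s a) Set.univ).toReal :=
        norm_integral_le_of_norm_le_const (Filter.Eventually.of_forall fun s' => by
          simpa [Real.norm_eq_abs] using hptw s')
      rw [measure_univ, ENNReal.toReal_one, mul_one, Real.norm_eq_abs] at hnormI
      exact mul_le_mul_of_nonneg_left hnormI hγ.1.le
  refine ⟨key, ?_⟩
  rintro Q Q' hQm hQ'm ⟨M, hM⟩ ⟨M', hM'⟩ hfix hfix'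
  have hn : ∀ n s al, |Q s al - Q' s al| ≤ γ ^ n * (M + M') := by
      intro n
      induction n with
      | zero =>
        intro s al
        simp only [pow_zero, one_mul]
        calc |Q s al - Q' s al| ≤ |Q s al| + |Q' s al| := abs_sub _ _
          _ ≤ M + M' := add_le_add (hM s al) (hM' s al)
      | succ n ih =>
        intro s al
        have h := key Q Q' (γ ^ n * (M + M')) hQm hQ'm ⟨M, hM⟩ ⟨M', hM'⟩ ih s al
        rw [← hfix s al, ← hfix' s al] at h
        calc |Q s al - Q' s al| ≤ γ * (γ ^ n * (M + M')) := h
          _ = γ ^ (n + 1) * (M + M') := by ring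
  funext s al
  have hlim : Filter.Tendsto (fun n => γ ^ n * (M + M')) Filter.atTop (nhds 0) := by
      have := (tendsto_pow_atTop_nhds_zero_of_lt_one hγ.1.le hγ.2).mul_const (M + M')
      simpa using this
  have h0 : |Q s al - Q' s al| ≤ 0 := ge_of_tendsto' hlim fun n => hn n s al
  have := abs_nonneg (Q s al - Q' s al)
  have : |Q s al - Q' s al| = 0 := le_antisymm h0 this
  exact sub_eq_zero.1 (abs_eq_zero.1 this)
end

section
/- Let A have finite positive Lebesgue measure and let f, f' be bounded by M with ‖f − f'‖₂ small. For the softmax densities π = π_f, π' = π_{f'}, the log-densities satisfy ‖log π − log π'‖_{L²} ≤ ‖f − f'‖₂ + |A|^{1/2} e^{2M} K ‖f − f'‖₂ for a constant K depending only on M; i.e. the map f ↦ log π_f is Lipschitz from (bounded subsets of) L² to L². -/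
open MeasureTheory Real

private lemma exp_diff_le {M x y : ℝ} (hx : x ≤ M) (h : y ≤ x) :
    Real.exp x - Real.exp y ≤ Real.exp M * (x - y) := by
  have h1 : (y - x) + 1 ≤ Real.exp (y - x) := Real.add_one_le_exp (y - x)
  have h2 : Real.exp y = Real.exp x * Real.exp (y - x) := by
    rw [← Real.exp_add]; ring_nf
  have h3 : Real.exp x ≤ Real.exp M := Real.exp_le_exp.mpr hx
  nlinarith [Real.exp_pos x, Real.exp_pos (y - x)]

private lemma exp_lip {M x y : ℝ} (hx : |x| ≤ M) (hy : |y| ≤ M) :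
    |Real.exp x - Real.exp y| ≤ Real.exp M * |x - y| := by
  rcases le_total y x with h | h
  · rw [abs_of_nonneg (by linarith [Real.exp_le_exp.mpr h] : (0:ℝ) ≤ Real.exp x - Real.exp y),
      abs_of_nonneg (by linarith : (0:ℝ) ≤ x - y)]
    exact exp_diff_le (abs_le.mp hx).2 h
  · rw [abs_sub_comm, abs_sub_comm x y,
      abs_of_nonneg (by linarith [Real.exp_le_exp.mpr h] : (0:ℝ) ≤ Real.exp y - Real.exp x),
      abs_of_nonneg (by linarith : (0:ℝ) ≤ y - x)]
    exact exp_diff_le (abs_le.mp hy).2 h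

private lemma log_diff_le {m x y : ℝ} (hm : 0 < m) (hx : m ≤ x) (hy : m ≤ y) (h : y ≤ x) :
    Real.log x - Real.log y ≤ (x - y) / m := by
  have hx0 : 0 < x := lt_of_lt_of_le hm hx
  have hy0 : 0 < y := lt_of_lt_of_le hm hy
  have h1 : Real.log (x / y) ≤ x / y - 1 := Real.log_le_sub_one_of_pos (div_pos hx0 hy0)
  rw [Real.log_div hx0.ne' hy0.ne'] at h1
  have h2 : x / y - 1 = (x - y) / y := by field_simp
  have h3 : (x - y) / y ≤ (x - y) / m := div_le_div_of_nonneg_left (by linarith) hm hy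
  linarith

private lemma log_diff_abs {m x y : ℝ} (hm : 0 < m) (hx : m ≤ x) (hy : m ≤ y) :
    |Real.log x - Real.log y| ≤ |x - y| / m := by
  rcases le_total y x with h | h
  · rw [abs_of_nonneg (by linarith : (0:ℝ) ≤ x - y),
      abs_of_nonneg (sub_nonneg.mpr (Real.log_le_log (lt_of_lt_of_le hm hy) h))]
    exact log_diff_le hm hx hy h
  · rw [abs_sub_comm, abs_sub_comm x y,
      abs_of_nonneg (by linarith : (0:ℝ) ≤ y - x),
      abs_of_nonneg (sub_nonneg.mpr (Real.log_le_log (lt_of_lt_of_le hm hx) h))]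
    exact log_diff_le hm hy hx h

private lemma cs_int {α : Type*} [MeasurableSpace α] (μ : Measure α) [IsFiniteMeasure μ]
    (g : α → ℝ) (hg : MemLp g 2 μ) :
    ∫ a, |g a| ∂μ ≤ Real.sqrt ((μ Set.univ).toReal) * Real.sqrt (∫ a, g a ^ 2 ∂μ) := by
  have hpq : (2:ℝ).HolderConjugate 2 := by constructor <;> norm_num
  have h1 : MemLp (fun _ : α => (1:ℝ)) (ENNReal.ofReal 2) μ := memLp_const 1
  have h2 : MemLp (fun a => |g a|) (ENNReal.ofReal 2) μ := by
    have := hg.norm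
    simpa [Real.norm_eq_abs, ENNReal.ofReal_ofNat] using this
  have := integral_mul_le_Lp_mul_Lq_of_nonneg hpq
    (ae_of_all _ fun _ => zero_le_one)
    (ae_of_all _ fun a => abs_nonneg (g a)) h1 h2
  simp only [one_mul] at this
  calc ∫ a, |g a| ∂μ ≤ (∫ (_ : α), (1:ℝ) ^ (2:ℝ) ∂μ) ^ (1/(2:ℝ)) * (∫ a, |g a| ^ (2:ℝ) ∂μ) ^ (1/(2:ℝ)) := this
    _ = Real.sqrt ((μ Set.univ).toReal) * Real.sqrt (∫ a, g a ^ 2 ∂μ) := by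
        rw [← Real.sqrt_eq_rpow, ← Real.sqrt_eq_rpow]
        congr 1
        · simp [Real.rpow_natCast, measureReal_def]
        · congr 1
          refine integral_congr_ae (ae_of_all _ fun a => ?_)
          show |g a| ^ (2:ℝ) = g a ^ 2
          rw [show ((2:ℝ)) = ((2:ℕ):ℝ) by norm_num, Real.rpow_natCast, sq_abs]

/-- Lipschitz continuity of `f ↦ log π_f` from (bounded subsets of) `L²(A)` to
`L²(A)`: for `f, f'` bounded by `M` with `‖f - f'‖₂` small, the softmax log-densities satisfy
`‖log π_f - log π_{f'}‖_{L²} ≤ ‖f - f'‖₂ + |A|^{1/2} e^{2M} K ‖f - f'‖₂`, where `K` depends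
only on `M`. -/
theorem softmax_log_density_lipschitz
    {d : ℕ} (A : Set (EuclideanSpace ℝ (Fin d)))
    (hA : IsCompact A) (hA0 : 0 < volume A) (hAfin : volume A < ⊤) (M : ℝ) :
    ∃ K : ℝ, 0 < K ∧ ∃ δ : ℝ, 0 < δ ∧
      ∀ f f' : EuclideanSpace ℝ (Fin d) → ℝ,
        Measurable f → Measurable f' →
        (∀ a ∈ A, |f a| ≤ M) → (∀ a ∈ A, |f' a| ≤ M) →
        Real.sqrt (∫ a in A, (f a - f' a) ^ 2) ≤ δ →
        Real.sqrt (∫ a in A,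
            ((f a - Real.log (∫ a' in A, Real.exp (f a')))
              - (f' a - Real.log (∫ a' in A, Real.exp (f' a')))) ^ 2)
          ≤ Real.sqrt (∫ a in A, (f a - f' a) ^ 2)
            + Real.sqrt ((volume A).toReal) * Real.exp (2 * M) * K
                * Real.sqrt (∫ a in A, (f a - f' a) ^ 2) := by
  have hAmeas : MeasurableSet A := hA.measurableSet
  set V : ℝ := (volume A).toReal with hVdef
  have hV0 : 0 < V := ENNReal.toReal_pos hA0.ne' hAfin.ne
  have hsV : (0:ℝ) < Real.sqrt V := Real.sqrt_pos.mpr hV0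
  refine ⟨1 / Real.sqrt V, by positivity, 1, one_pos, fun f f' hf hf' hbf hbf' _ => ?_⟩
  set μ := volume.restrict A with hμ
  haveI : IsFiniteMeasure μ := ⟨by rw [hμ, Measure.restrict_apply_univ]; exact hAfin⟩
  have hμuniv : (μ Set.univ).toReal = V := by rw [hμ, Measure.restrict_apply_univ]
  -- integrability helpers
  have intOn : ∀ (h : EuclideanSpace ℝ (Fin d) → ℝ) (C : ℝ), Measurable h →
      (∀ a ∈ A, |h a| ≤ C) → Integrable h μ := fun h C hm hb =>
    Integrable.mono' (integrable_const C) hm.aestronglyMeasurable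
      ((ae_restrict_iff' hAmeas).mpr (ae_of_all _ fun a ha => by
        simpa [Real.norm_eq_abs] using hb a ha))
  have memL2 : ∀ (h : EuclideanSpace ℝ (Fin d) → ℝ) (C : ℝ), Measurable h →
      (∀ a ∈ A, |h a| ≤ C) → MemLp h 2 μ := fun h C hm hb =>
    (memLp_top_of_bound hm.aestronglyMeasurable C
      ((ae_restrict_iff' hAmeas).mpr (ae_of_all _ fun a ha => by
        simpa [Real.norm_eq_abs] using hb a ha))).mono_exponent le_top
  set g : EuclideanSpace ℝ (Fin d) → ℝ := fun a => f a - f' a with hgdef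
  have hgmeas : Measurable g := hf.sub hf'
  have hgbound : ∀ a ∈ A, |g a| ≤ 2 * M := fun a ha => by
    have := hbf a ha; have := hbf' a ha
    simp only [hgdef]
    calc |f a - f' a| ≤ |f a| + |f' a| := abs_sub _ _
      _ ≤ 2 * M := by linarith
  have hgint : Integrable g μ := intOn g (2*M) hgmeas hgbound
  have hgmem : MemLp g 2 μ := memL2 g (2*M) hgmeas hgbound
  have hg2int : Integrable (fun a => g a ^ 2) μ := hgmem.integrable_sq
  set S : ℝ := ∫ a in A, (f a - f' a) ^ 2 with hSdef
  have hSg : S = ∫ a, g a ^ 2 ∂μ := rfl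
  have hS0 : (0:ℝ) ≤ S := by
    rw [hSg]; exact integral_nonneg fun a => sq_nonneg _
  have hsqS : Real.sqrt S ^ 2 = S := Real.sq_sqrt hS0
  have hsqV : Real.sqrt V ^ 2 = V := Real.sq_sqrt hV0.le
  -- Cauchy-Schwarz for g
  have hCS : ∫ a, |g a| ∂μ ≤ Real.sqrt V * Real.sqrt S := by
    have := cs_int μ g hgmem
    rwa [hμuniv, ← hSg] at this
  have hI : |∫ a, g a ∂μ| ≤ Real.sqrt V * Real.sqrt S :=
    le_trans (by simpa [Real.norm_eq_abs] using norm_integral_le_integral_norm (μ := μ) g) hCS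
  -- partition function bounds
  set Z : ℝ := ∫ a' in A, Real.exp (f a') with hZdef
  set Z' : ℝ := ∫ a' in A, Real.exp (f' a') with hZ'def
  have hexpb : ∀ (h : EuclideanSpace ℝ (Fin d) → ℝ), (∀ a ∈ A, |h a| ≤ M) →
      ∀ a ∈ A, |Real.exp (h a)| ≤ Real.exp M := fun h hb a ha => by
    rw [abs_of_pos (Real.exp_pos _)]
    exact Real.exp_le_exp.mpr (abs_le.mp (hb a ha)).2
  have hZint : Integrable (fun a => Real.exp (f a)) μ :=
    intOn _ (Real.exp M) (Real.measurable_exp.comp hf) (hexpb f hbf)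
  have hZ'int : Integrable (fun a => Real.exp (f' a)) μ :=
    intOn _ (Real.exp M) (Real.measurable_exp.comp hf') (hexpb f' hbf')
  have hZlb : V * Real.exp (-M) ≤ Z := by
    have h1 : ∫ a, Real.exp (-M) ∂μ ≤ ∫ a, Real.exp (f a) ∂μ :=
      integral_mono_ae (integrable_const _) hZint
        ((ae_restrict_iff' hAmeas).mpr (ae_of_all _ fun a ha =>
          Real.exp_le_exp.mpr (neg_le_of_abs_le (hbf a ha))))
    rwa [integral_const, measureReal_def, hμuniv, smul_eq_mul] at h1
  have hZ'lb : V * Real.exp (-M) ≤ Z' := by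
    have h1 : ∫ a, Real.exp (-M) ∂μ ≤ ∫ a, Real.exp (f' a) ∂μ :=
      integral_mono_ae (integrable_const _) hZ'int
        ((ae_restrict_iff' hAmeas).mpr (ae_of_all _ fun a ha =>
          Real.exp_le_exp.mpr (neg_le_of_abs_le (hbf' a ha))))
    rwa [integral_const, measureReal_def, hμuniv, smul_eq_mul] at h1
  have hm0 : (0:ℝ) < V * Real.exp (-M) := mul_pos hV0 (Real.exp_pos _)
  -- |Z - Z'| bound
  have hZZ' : |Z - Z'| ≤ Real.exp M * (Real.sqrt V * Real.sqrt S) := by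
    have h1 : Z - Z' = ∫ a, (Real.exp (f a) - Real.exp (f' a)) ∂μ :=
      (integral_sub hZint hZ'int).symm
    rw [h1]
    calc |∫ a, (Real.exp (f a) - Real.exp (f' a)) ∂μ|
        ≤ ∫ a, |Real.exp (f a) - Real.exp (f' a)| ∂μ := by
          simpa [Real.norm_eq_abs] using
            norm_integral_le_integral_norm (μ := μ) (fun a => Real.exp (f a) - Real.exp (f' a))
      _ ≤ ∫ a, Real.exp M * |g a| ∂μ := by
          refine integral_mono_ae ((hZint.sub hZ'int).abs) ((hgint.abs).const_mul _)
            ((ae_restrict_iff' hAmeas).mpr (ae_of_all _ fun a ha => ?_))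
          exact exp_lip (hbf a ha) (hbf' a ha)
      _ = Real.exp M * ∫ a, |g a| ∂μ := integral_const_mul _ _
      _ ≤ Real.exp M * (Real.sqrt V * Real.sqrt S) :=
          mul_le_mul_of_nonneg_left hCS (Real.exp_pos M).le
  -- log partition bound
  set C : ℝ := Real.log Z - Real.log Z' with hCdef
  have hCb : |C| * Real.sqrt V ≤ Real.exp (2*M) * Real.sqrt S := by
    have h1 : |C| ≤ |Z - Z'| / (V * Real.exp (-M)) :=
      log_diff_abs hm0 hZlb hZ'lb
    have h2 : |C| ≤ Real.exp M * (Real.sqrt V * Real.sqrt S) / (V * Real.exp (-M)) :=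
      le_trans h1 (div_le_div_of_nonneg_right hZZ' hm0.le)
    have hexp2 : Real.exp (2*M) = Real.exp M * Real.exp M := by
      rw [← Real.exp_add]; ring_nf
    have hV' : Real.sqrt V * Real.sqrt V = V := Real.mul_self_sqrt hV0.le
    have h3 : Real.exp M * (Real.sqrt V * Real.sqrt S) / (V * Real.exp (-M)) * Real.sqrt V
        = Real.exp (2*M) * Real.sqrt S := by
      rw [hexp2, Real.exp_neg]
      field_simp
      linear_combination (Real.sqrt S) * hsqV
    calc |C| * Real.sqrt V
        ≤ (Real.exp M * (Real.sqrt V * Real.sqrt S) / (V * Real.exp (-M))) * Real.sqrt V :=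
          mul_le_mul_of_nonneg_right h2 hsV.le
      _ = Real.exp (2*M) * Real.sqrt S := h3
  -- expansion of the squared L2 distance
  have hexpand : (∫ a, (g a - C) ^ 2 ∂μ)
      = S - (2*C) * (∫ a, g a ∂μ) + C^2 * V := by
    have i1 : Integrable (fun a => g a ^ 2 - (2*C) * g a) μ :=
      hg2int.sub (hgint.const_mul (2*C))
    have e2 : ∫ a, (g a ^ 2 - (2*C) * g a) ∂μ = S - (2*C) * ∫ a, g a ∂μ := by
      rw [integral_sub hg2int (hgint.const_mul (2*C)), integral_const_mul (2*C) g, ← hSg]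
    calc (∫ a, (g a - C) ^ 2 ∂μ)
        = ∫ a, (g a ^ 2 - (2*C) * g a + C^2) ∂μ :=
          integral_congr_ae (ae_of_all _ fun a => by ring)
      _ = (∫ a, (g a ^ 2 - (2*C) * g a) ∂μ) + ∫ a, (C^2 : ℝ) ∂μ :=
          integral_add i1 (integrable_const _)
      _ = S - (2*C) * (∫ a, g a ∂μ) + C^2 * V := by
          rw [e2, integral_const, measureReal_def, hμuniv, smul_eq_mul]; ring
  -- key inequality
  have key : (∫ a, (g a - C) ^ 2 ∂μ)
      ≤ (Real.sqrt S + Real.exp (2*M) * Real.sqrt S) ^ 2 := by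
    rw [hexpand]
    have h4 : -((2*C) * (∫ a, g a ∂μ)) ≤ 2 * Real.exp (2*M) * S := by
      have habs : |C * (∫ a, g a ∂μ)| ≤ (Real.exp (2*M) * Real.sqrt S) * Real.sqrt S := by
        rw [abs_mul]
        calc |C| * |∫ a, g a ∂μ| ≤ |C| * (Real.sqrt V * Real.sqrt S) :=
              mul_le_mul_of_nonneg_left hI (abs_nonneg C)
          _ = (|C| * Real.sqrt V) * Real.sqrt S := by ring
          _ ≤ (Real.exp (2*M) * Real.sqrt S) * Real.sqrt S :=
              mul_le_mul_of_nonneg_right hCb (Real.sqrt_nonneg S)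
      have hss : Real.sqrt S * Real.sqrt S = S := Real.mul_self_sqrt hS0
      have habs' : |C * (∫ a, g a ∂μ)| ≤ Real.exp (2*M) * S := by
        calc |C * (∫ a, g a ∂μ)| ≤ Real.exp (2*M) * Real.sqrt S * Real.sqrt S := habs
          _ = Real.exp (2*M) * S := by rw [mul_assoc, hss]
      linarith [neg_abs_le (C * (∫ a, g a ∂μ)), habs']
    have h5 : C^2 * V ≤ Real.exp (2*M)^2 * S := by
      nlinarith [mul_self_le_mul_self (by positivity : (0:ℝ) ≤ |C| * Real.sqrt V) hCb,
        sq_abs C]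
    have hrhs2 : (Real.sqrt S + Real.exp (2*M) * Real.sqrt S) ^ 2
        = S + 2 * Real.exp (2*M) * S + Real.exp (2*M) ^ 2 * S := by
      linear_combination ((1 + Real.exp (2*M)) ^ 2) * hsqS
    linarith [h4, h5]
  -- conclude
  have hgoal_eq : (∫ a in A, ((f a - Real.log Z) - (f' a - Real.log Z')) ^ 2)
      = ∫ a, (g a - C) ^ 2 ∂μ := by
    refine integral_congr_ae (ae_of_all _ fun a => ?_)
    simp only [hgdef, hCdef]; ring
  rw [hgoal_eq]
  have hfinal : Real.sqrt (∫ a, (g a - C) ^ 2 ∂μ)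
      ≤ Real.sqrt S + Real.exp (2*M) * Real.sqrt S := by
    calc Real.sqrt (∫ a, (g a - C) ^ 2 ∂μ)
        ≤ Real.sqrt ((Real.sqrt S + Real.exp (2*M) * Real.sqrt S) ^ 2) :=
          Real.sqrt_le_sqrt key
      _ = Real.sqrt S + Real.exp (2*M) * Real.sqrt S := by
          rw [Real.sqrt_sq (by positivity)]
  have hrhs : Real.sqrt V * Real.exp (2 * M) * (1 / Real.sqrt V) * Real.sqrt S
      = Real.exp (2*M) * Real.sqrt S := by field_simp
  linarith [hfinal, hrhs.le, hrhs.ge]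
end
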